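/- arXiv:1211.0998 — 4 statements merged into one kernel-verified Lean document; each statement's English description precedes it below -/
import Mathlib

section
/- For every r ∈ ℤ_{≥0}, every a_r-module M, every α ∈ ℂ, and all m, k ∈ ℤ, the operators D_m on N(M,α) satisfy D_m ∘ D_k − D_k ∘ D_m = (k−m)·D_{m+k}. In particular the assignment d_m ↦ D_m, c ↦ 0 makes N(M,α) into a module over the Virasoro algebra with trivial central action. -/
open Finsupp

variable {M : Type*} [AddCommGroup M] [Module ℂ M]

/-- `(M, T)` is an `a_r`-module: `M` carries operators `T_0, …, T_r` with
`T_i∘T_j − T_j∘T_i = (j−i)·T_{i+j}` for `i+j ≤ r` and `T_i∘T_j = T_j∘T_i` for `i+j > r`. -/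
def IsArModule (r : ℕ) (T : ℕ → Module.End ℂ M) : Prop :=
  (∀ i j, i ≤ r → j ≤ r → i + j ≤ r →
      T i ∘ₗ T j - T j ∘ₗ T i = (((j : ℂ) - (i : ℂ)) • T (i + j))) ∧
  (∀ i j, i ≤ r → j ≤ r → r < i + j → T i ∘ₗ T j = T j ∘ₗ T i)

/-- A subspace `U ⊆ M` is an `a_r`-submodule if `T_i U ⊆ U` for all `0 ≤ i ≤ r`. -/
def IsArSubmodule (r : ℕ) (T : ℕ → Module.End ℂ M) (U : Submodule ℂ M) : Prop :=
  ∀ i ≤ r, ∀ v ∈ U, T i v ∈ U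

/-- `M` is a simple `a_r`-module: nonzero, and the only `a_r`-submodules are `0` and `M`. -/
def IsSimpleArModule (r : ℕ) (T : ℕ → Module.End ℂ M) : Prop :=
  (∃ v : M, v ≠ 0) ∧
    ∀ U : Submodule ℂ M, IsArSubmodule r T U → U = ⊥ ∨ U = ⊤

/-- The operator `D_m` on `N(M, α) = ⊕_{n ∈ ℤ} M ⊗ t^n` (finitely supported functions `ℤ → M`,
with `v ⊗ t^n` the function `Finsupp.single n v`), given by
`D_m (v ⊗ t^n) = ((α+n)•v + Σ_{i=0}^r (m^{i+1}/(i+1)!) • T_i v) ⊗ t^{n+m}`. -/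
noncomputable def Dop (r : ℕ) (T : ℕ → Module.End ℂ M) (α : ℂ) (m : ℤ) :
    (ℤ →₀ M) →ₗ[ℂ] (ℤ →₀ M) :=
  Finsupp.lsum ℂ fun n : ℤ =>
    (Finsupp.lsingle (n + m) : M →ₗ[ℂ] ℤ →₀ M) ∘ₗ
      ((α + (n : ℂ)) • (LinearMap.id : M →ₗ[ℂ] M) +
        ∑ i ∈ Finset.range (r + 1),
          ((m : ℂ) ^ (i + 1) / (Nat.factorial (i + 1) : ℂ)) • (T i : M →ₗ[ℂ] M))

/-- The operator `ω^{(s)}_{l,m} = Σ_{i=0}^s binom(s,i)·(−1)^{s−i}·D_{l−m−i}∘D_{m+i}`. -/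
noncomputable def omegaOp (r : ℕ) (T : ℕ → Module.End ℂ M) (α : ℂ) (s : ℕ) (l m : ℤ) :
    (ℤ →₀ M) →ₗ[ℂ] (ℤ →₀ M) :=
  ∑ i ∈ Finset.range (s + 1),
    ((s.choose i : ℂ) * (-1) ^ (s - i)) •
      (Dop r T α (l - m - (i : ℤ)) ∘ₗ Dop r T α (m + (i : ℤ)))

lemma scalar_key (m k : ℂ) (s : ℕ) :
    (k * (k ^ (s+1) / ((s+1).factorial : ℂ)) - m * (m ^ (s+1) / ((s+1).factorial : ℂ)))
      + ∑ i ∈ Finset.range (s+1),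
          (m ^ (i+1) / ((i+1).factorial : ℂ)) * (k ^ (s-i+1) / ((s-i+1).factorial : ℂ))
            * (((s-i : ℕ) : ℂ) - (i : ℂ))
    = (k - m) * ((m+k) ^ (s+1) / ((s+1).factorial : ℂ)) := by
  have hF : ((s+1).factorial : ℂ) ≠ 0 := Nat.cast_ne_zero.2 (Nat.factorial_ne_zero _)
  have hterm : ∀ i ∈ Finset.range (s+1),
      (m ^ (i+1) / ((i+1).factorial : ℂ)) * (k ^ (s-i+1) / ((s-i+1).factorial : ℂ))
          * (((s-i : ℕ) : ℂ) - (i : ℂ))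
        = ((((s+1).choose (i+1) : ℂ)) * (m ^ (i+1) * k ^ (s-i+1))
            - (((s+1).choose i : ℂ)) * (m ^ (i+1) * k ^ (s-i+1))) / ((s+1).factorial : ℂ) := by
    intro i hi
    have hi' : i ≤ s := Nat.lt_succ_iff.mp (Finset.mem_range.mp hi)
    have hF1 : ((i+1).factorial : ℂ) ≠ 0 := Nat.cast_ne_zero.2 (Nat.factorial_ne_zero _)
    have hF2 : ((s-i+1).factorial : ℂ) ≠ 0 := Nat.cast_ne_zero.2 (Nat.factorial_ne_zero _)
    have hc1 : (((s+1).choose (i+1) : ℂ)) * ((i+1).factorial : ℂ) * ((s-i).factorial : ℂ)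
        = ((s+1).factorial : ℂ) := by
      have := Nat.choose_mul_factorial_mul_factorial (by omega : i+1 ≤ s+1)
      rw [show s+1-(i+1) = s-i from by omega] at this
      exact_mod_cast congrArg (Nat.cast : ℕ → ℂ) this
    have hc2 : (((s+1).choose i : ℂ)) * ((i).factorial : ℂ) * ((s-i+1).factorial : ℂ)
        = ((s+1).factorial : ℂ) := by
      have := Nat.choose_mul_factorial_mul_factorial (by omega : i ≤ s+1)
      rw [show s+1-i = s-i+1 from by omega] at this
      exact_mod_cast congrArg (Nat.cast : ℕ → ℂ) this
    have e1 : ((i+1).factorial : ℂ) = ((i:ℂ)+1) * (i.factorial : ℂ) := by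
      push_cast [Nat.factorial_succ]; ring
    have e2 : ((s-i+1).factorial : ℂ) = (((s-i:ℕ):ℂ)+1) * ((s-i).factorial : ℂ) := by
      push_cast [Nat.factorial_succ]; ring
    rw [div_mul_div_comm, div_mul_eq_mul_div, eq_div_iff hF, div_mul_eq_mul_div,
      div_eq_iff (mul_ne_zero hF1 hF2)]
    rw [e1] at hc1
    rw [e2] at hc2
    rw [e1, e2]
    linear_combination (-(m^(i+1) * k^(s-i+1) * (((s-i:ℕ):ℂ)+1))) * hc1
      + (m^(i+1) * k^(s-i+1) * ((i:ℂ)+1)) * hc2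
  rw [Finset.sum_congr rfl hterm]
  rw [← Finset.sum_div, Finset.sum_sub_distrib]
  have hA : ∑ i ∈ Finset.range (s+1), (((s+1).choose (i+1) : ℂ)) * (m ^ (i+1) * k ^ (s-i+1))
      = k * (m+k) ^ (s+1) - k ^ (s+2) := by
    rw [add_pow, Finset.mul_sum]
    rw [Finset.sum_range_succ' (fun a => k * (m ^ a * k ^ (s+1-a) * ((s+1).choose a : ℂ)))]
    simp only [pow_zero, one_mul, Nat.sub_zero, Nat.choose_zero_right, Nat.cast_one, mul_one]
    rw [show k * k ^ (s+1) = k ^ (s+2) from by ring]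
    rw [add_sub_cancel_right]
    apply Finset.sum_congr rfl
    intro i hi
    have hi' : i ≤ s := Nat.lt_succ_iff.mp (Finset.mem_range.mp hi)
    rw [show s+1-(i+1) = s-i from by omega]
    rw [show s-i+1 = (s-i)+1 from rfl, pow_succ]
    ring
  have hB : ∑ i ∈ Finset.range (s+1), (((s+1).choose i : ℂ)) * (m ^ (i+1) * k ^ (s-i+1))
      = m * (m+k) ^ (s+1) - m ^ (s+2) := by
    rw [add_pow, Finset.mul_sum]
    rw [Finset.sum_range_succ (fun a => m * (m ^ a * k ^ (s+1-a) * ((s+1).choose a : ℂ)))]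
    simp only [Nat.sub_self, pow_zero, Nat.choose_self, Nat.cast_one, mul_one]
    rw [show m * m ^ (s+1) = m ^ (s+2) from by ring]
    rw [add_sub_cancel_right]
    apply Finset.sum_congr rfl
    intro i hi
    have hi' : i ≤ s := Nat.lt_succ_iff.mp (Finset.mem_range.mp hi)
    rw [show s+1-i = s-i+1 from by omega]
    ring
  rw [hA, hB]
  field_simp
  ring

private noncomputable def Pop (r : ℕ) (T : ℕ → Module.End ℂ M) (x : ℤ) : Module.End ℂ M :=
  ∑ i ∈ Finset.range (r + 1), ((x : ℂ) ^ (i + 1) / (Nat.factorial (i + 1) : ℂ)) • T i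

private lemma Dop_single (r : ℕ) (T : ℕ → Module.End ℂ M) (α : ℂ) (m n : ℤ) (v : M) :
    Dop r T α m (Finsupp.single n v)
      = Finsupp.single (n + m) ((α + (n : ℂ)) • v + Pop r T m v) := by
  simp [Dop, Pop, Finsupp.lsum_single, LinearMap.sum_apply]

private lemma Pop_key (r : ℕ) (T : ℕ → Module.End ℂ M) (hT : IsArModule r T) (m k : ℤ) :
    ((k:ℂ) • Pop r T k - (m:ℂ) • Pop r T m) + (Pop r T m * Pop r T k - Pop r T k * Pop r T m)
      = ((k:ℂ) - (m:ℂ)) • Pop r T (m+k) := by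
  classical
  set c : ℤ → ℕ → ℂ := fun x i => (x : ℂ) ^ (i + 1) / (Nat.factorial (i + 1) : ℂ) with hc
  have hmul : ∀ x y : ℤ, Pop r T x * Pop r T y
      = ∑ i ∈ Finset.range (r+1), ∑ j ∈ Finset.range (r+1),
          (c x i * c y j) • (T i * T j) := by
    intro x y
    rw [Pop, Pop, Finset.sum_mul_sum]
    simp_rw [smul_mul_smul_comm]
    rfl
  have hcommut : Pop r T m * Pop r T k - Pop r T k * Pop r T m
      = ∑ p ∈ (Finset.range (r+1) ×ˢ Finset.range (r+1)).filter (fun p => p.1 + p.2 ≤ r),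
          (c m p.1 * c k p.2 * ((p.2:ℂ) - (p.1:ℂ))) • T (p.1 + p.2) := by
    rw [hmul, hmul]
    rw [show (∑ i ∈ Finset.range (r+1), ∑ j ∈ Finset.range (r+1),
          (c k i * c m j) • (T i * T j))
        = ∑ i ∈ Finset.range (r+1), ∑ j ∈ Finset.range (r+1),
          (c k j * c m i) • (T j * T i) from Finset.sum_comm]
    simp only [mul_comm (c k _) (c m _)]
    simp only [← Finset.sum_sub_distrib, ← smul_sub]
    have : ∀ i ∈ Finset.range (r+1), ∀ j ∈ Finset.range (r+1),
        (c m i * c k j) • (T i * T j - T j * T i)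
          = if i + j ≤ r then (c m i * c k j * ((j:ℂ) - (i:ℂ))) • T (i+j) else 0 := by
      intro i hi j hj
      have hi' : i ≤ r := Nat.lt_succ_iff.mp (Finset.mem_range.mp hi)
      have hj' : j ≤ r := Nat.lt_succ_iff.mp (Finset.mem_range.mp hj)
      by_cases h : i + j ≤ r
      · rw [if_pos h]
        have := hT.1 i j hi' hj' h
        rw [Module.End.mul_eq_comp, Module.End.mul_eq_comp]
        rw [show (T i ∘ₗ T j - T j ∘ₗ T i : Module.End ℂ M)
            = (((j : ℂ) - (i : ℂ)) • T (i + j)) from this]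
        rw [smul_smul]
      · rw [if_neg h]
        have := hT.2 i j hi' hj' (by omega)
        rw [Module.End.mul_eq_comp, Module.End.mul_eq_comp, show (T i ∘ₗ T j : Module.End ℂ M) = T j ∘ₗ T i from this, sub_self, smul_zero]
    rw [Finset.sum_congr rfl (fun i hi => Finset.sum_congr rfl (fun j hj => this i hi j hj))]
    rw [← Finset.sum_product']
    rw [← Finset.sum_filter]
  have hre : (∑ p ∈ (Finset.range (r+1) ×ˢ Finset.range (r+1)).filter (fun p => p.1 + p.2 ≤ r),
        (c m p.1 * c k p.2 * ((p.2:ℂ) - (p.1:ℂ))) • T (p.1 + p.2))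
      = ∑ s ∈ Finset.range (r+1),
          (∑ i ∈ Finset.range (s+1), c m i * c k (s-i) * (((s-i:ℕ):ℂ) - (i:ℂ))) • T s := by
    rw [show (∑ s ∈ Finset.range (r+1),
          (∑ i ∈ Finset.range (s+1), c m i * c k (s-i) * (((s-i:ℕ):ℂ) - (i:ℂ))) • T s)
        = ∑ q ∈ (Finset.range (r+1)).sigma (fun s => Finset.range (s+1)),
            (c m q.2 * c k (q.1 - q.2) * (((q.1 - q.2 : ℕ):ℂ) - (q.2:ℂ))) • T q.1 from by
      rw [Finset.sum_sigma]
      exact Finset.sum_congr rfl fun s hs => by rw [Finset.sum_smul]]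
    refine Finset.sum_bij' (fun p _ => (⟨p.1 + p.2, p.1⟩ : Σ _ : ℕ, ℕ))
      (fun q _ => (q.2, q.1 - q.2)) ?_ ?_ ?_ ?_ ?_
    · intro p hp
      simp only [Finset.mem_filter, Finset.mem_product, Finset.mem_range] at hp
      simp only [Finset.mem_sigma, Finset.mem_range]
      omega
    · intro q hq
      simp only [Finset.mem_sigma, Finset.mem_range] at hq
      simp only [Finset.mem_filter, Finset.mem_product, Finset.mem_range]
      omega
    · rintro ⟨p1, p2⟩ hp
      simp only [Finset.mem_filter, Finset.mem_product, Finset.mem_range] at hp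
      show (p1, p1 + p2 - p1) = (p1, p2)
      simp only [Prod.mk.injEq]
      exact ⟨trivial, by omega⟩
    · rintro ⟨a, b⟩ hq
      simp only [Finset.mem_sigma, Finset.mem_range] at hq
      show (⟨b + (a - b), b⟩ : (_ : ℕ) × ℕ) = ⟨a, b⟩
      rw [show b + (a - b) = a from by omega]
    · intro p hp
      simp only [Finset.mem_filter, Finset.mem_product, Finset.mem_range] at hp
      have : p.1 + p.2 - p.1 = p.2 := by omega
      rw [this]
  rw [hcommut, hre, Pop, Pop, Pop, Finset.smul_sum, Finset.smul_sum, Finset.smul_sum,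
    ← Finset.sum_sub_distrib, ← Finset.sum_add_distrib]
  refine Finset.sum_congr rfl fun s hs => ?_
  rw [smul_smul, smul_smul, smul_smul, ← sub_smul, ← add_smul]
  congr 1
  have hsk := scalar_key (m:ℂ) (k:ℂ) s
  simp only [hc]
  push_cast
  linear_combination hsk


/-- for every `a_r`-module `M` and every `α ∈ ℂ`, the operators `D_m` on `N(M,α)`
satisfy `D_m ∘ D_k − D_k ∘ D_m = (k−m) • D_{m+k}`; in particular `d_m ↦ D_m`, `c ↦ 0` makes
`N(M,α)` a module over the Virasoro algebra with trivial central action. -/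
theorem virasoro_relation_on_N (r : ℕ) (T : ℕ → Module.End ℂ M)
    (hT : IsArModule r T) (α : ℂ) (m k : ℤ) :
    Dop r T α m ∘ₗ Dop r T α k - Dop r T α k ∘ₗ Dop r T α m
      = ((k : ℂ) - (m : ℂ)) • Dop r T α (m + k) := by
  apply Finsupp.lhom_ext
  intro n v
  simp only [LinearMap.sub_apply, LinearMap.comp_apply, LinearMap.smul_apply]
  rw [Dop_single, Dop_single, Dop_single, Dop_single, Dop_single, Finsupp.smul_single]
  rw [show n + k + m = n + (m + k) from by ring, show n + m + k = n + (m + k) from by ring,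
    ← Finsupp.single_sub]
  congr 1
  have hkey := congrArg (fun (f : Module.End ℂ M) => f v) (Pop_key r T hT m k)
  simp only [LinearMap.sub_apply, LinearMap.add_apply, LinearMap.smul_apply,
    Module.End.mul_apply] at hkey
  push_cast
  rw [map_add, map_add, map_smul, map_smul]
  linear_combination (norm := module) hkey
end

section
/- Fix α₁, λ₁, λ₂ ∈ ℂ with λ₁ ≠ 0 or λ₂ ≠ 0. Consider ℂ[x] with the operators T_0 f(x) = (x+α₁)·f(x), T_1 f(x) = λ₁·f(x−1), T_2 f(x) = λ₂·f(x−2). Then the only subspaces U ⊆ ℂ[x] with T_0 U ⊆ U, T_1 U ⊆ U and T_2 U ⊆ U are 0 and ℂ[x]; i.e., ℂ[x] is a simple a_2-module. -/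
open Polynomial

private lemma shift_fixed_natDegree_zero (c : ℂ) (hc : c ≠ 0) (f : ℂ[X])
    (h : f.comp (X - C c) = f) : f.natDegree = 0 := by
  have hev : ∀ a : ℂ, f.eval (a - c) = f.eval a := by
    intro a
    conv_rhs => rw [← h]
    simp [eval_comp]
  have hk : ∀ k : ℕ, f.eval (-(k : ℂ) * c) = f.eval 0 := by
    intro k
    induction k with
    | zero => norm_num
    | succ n ih =>
      have : (-(↑(n+1) : ℂ) * c) = (-(n : ℂ) * c) - c := by push_cast; ring
      rw [this, hev, ih]
  have hg : f - C (f.eval 0) = 0 := by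
    apply Polynomial.eq_zero_of_infinite_isRoot
    apply Set.Infinite.mono (s := Set.range (fun k : ℕ => -(k : ℂ) * c))
    · rintro x ⟨k, rfl⟩
      have := hk k
      rw [neg_mul] at this
      simp [IsRoot, sub_eq_zero, this]
    · apply Set.infinite_range_of_injective
      intro a b hab
      simp only [neg_mul, neg_inj, mul_eq_mul_right_iff] at hab
      exact_mod_cast hab.resolve_right hc
  have : f = C (f.eval 0) := by linear_combination hg
  rw [this, natDegree_C]

/-- with `λ₁ ≠ 0` or `λ₂ ≠ 0`, the `a_2`-module `ℂ[x]` with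
`T_0 f = (x+α₁)·f`, `T_1 f = λ₁·f(x−1)`, `T_2 f = λ₂·f(x−2)` is simple: the only subspaces
invariant under `T_0, T_1, T_2` are `0` and `ℂ[x]`. -/
theorem polynomial_a2_module_simple (α₁ lam₁ lam₂ : ℂ) (hlam : lam₁ ≠ 0 ∨ lam₂ ≠ 0)
    (U : Submodule ℂ ℂ[X])
    (hU0 : ∀ f ∈ U, (X + C α₁) * f ∈ U)
    (hU1 : ∀ f ∈ U, lam₁ • f.comp (X - C 1) ∈ U)
    (hU2 : ∀ f ∈ U, lam₂ • f.comp (X - C 2) ∈ U) :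
    U = ⊥ ∨ U = ⊤ := by
  by_cases hbot : U = ⊥
  · exact Or.inl hbot
  right
  -- a nonzero shift preserving U
  obtain ⟨c, hc, hS⟩ : ∃ c : ℂ, c ≠ 0 ∧ ∀ f ∈ U, f.comp (X - C c) ∈ U := by
    rcases hlam with h1 | h2
    · refine ⟨1, one_ne_zero, fun f hf => ?_⟩
      have := U.smul_mem lam₁⁻¹ (hU1 f hf)
      rwa [smul_smul, inv_mul_cancel₀ h1, one_smul] at this
    · refine ⟨2, two_ne_zero, fun f hf => ?_⟩
      have := U.smul_mem lam₂⁻¹ (hU2 f hf)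
      rwa [smul_smul, inv_mul_cancel₀ h2, one_smul] at this
  obtain ⟨f₀, hf₀U, hf₀⟩ := Submodule.exists_mem_ne_zero_of_ne_bot hbot
  -- there is a nonzero constant in U
  have key : ∀ n : ℕ, ∀ f, f ∈ U → f ≠ 0 → f.natDegree ≤ n → ∃ a : ℂ, a ≠ 0 ∧ C a ∈ U := by
    intro n
    induction n with
    | zero =>
      intro f hf hf0 hdeg
      refine ⟨f.coeff 0, ?_, ?_⟩
      · intro h
        apply hf0
        rw [Polynomial.eq_C_of_natDegree_le_zero hdeg, h, map_zero]
      · rw [← Polynomial.eq_C_of_natDegree_le_zero hdeg]; exact hf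
    | succ n ih =>
      intro f hf hf0 hdeg
      rcases le_or_gt f.natDegree n with hle | hgt
      · exact ih f hf hf0 hle
      have hdn : f.natDegree = n + 1 := le_antisymm hdeg hgt
      set g := f.comp (X - C c) - f with hgdef
      have hcompdeg : (f.comp (X - C c)).natDegree = f.natDegree := by
        rw [natDegree_comp, natDegree_X_sub_C, mul_one]
      have hcomplc : (f.comp (X - C c)).leadingCoeff = f.leadingCoeff := by
        rw [leadingCoeff_comp (by rw [natDegree_X_sub_C]; exact one_ne_zero),
          leadingCoeff_X_sub_C, one_pow, mul_one]
      have hcompne : f.comp (X - C c) ≠ 0 := by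
        intro h
        have := hcomplc
        rw [h, leadingCoeff_zero] at this
        exact hf0 (leadingCoeff_eq_zero.mp this.symm)
      have hg0 : g ≠ 0 := by
        intro h
        have : f.comp (X - C c) = f := by
          have := sub_eq_zero.mp h
          exact this
        have := shift_fixed_natDegree_zero c hc f this
        omega
      have hdeglt : g.natDegree < f.natDegree := by
        apply natDegree_lt_natDegree hg0
        have hdegeq : (f.comp (X - C c)).degree = f.degree := by
          rw [degree_eq_natDegree hcompne, degree_eq_natDegree hf0, hcompdeg]
        rw [hgdef, ← hdegeq]
        exact degree_sub_lt hdegeq hcompne hcomplc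
      exact ih g (U.sub_mem (hS f hf) hf) hg0 (by omega)
  obtain ⟨a, ha, haU⟩ := key f₀.natDegree f₀ hf₀U hf₀ le_rfl
  have h1U : (1 : ℂ[X]) ∈ U := by
    have := U.smul_mem a⁻¹ haU
    rwa [smul_eq_C_mul, ← C_mul, inv_mul_cancel₀ ha, C_1] at this
  have hpow : ∀ k : ℕ, (X + C α₁) ^ k ∈ U := by
    intro k
    induction k with
    | zero => simpa using h1U
    | succ n ih =>
      rw [pow_succ']
      exact hU0 _ ih
  have hmonic : ∀ k : ℕ, ((X + C α₁) ^ k).Monic := fun k => (monic_X_add_C α₁).pow k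
  have hpowdeg : ∀ k : ℕ, ((X + C α₁) ^ k).natDegree = k := by
    intro k
    rw [natDegree_pow, natDegree_X_add_C, mul_one]
  have htop : ∀ n : ℕ, ∀ p : ℂ[X], p.natDegree ≤ n → p ∈ U := by
    intro n
    induction n with
    | zero =>
      intro p hp
      rw [Polynomial.eq_C_of_natDegree_le_zero hp, ← mul_one (C (p.coeff 0)),
        ← smul_eq_C_mul]
      exact U.smul_mem _ h1U
    | succ n ih =>
      intro p hp
      rcases le_or_gt p.natDegree n with hle | hgt
      · exact ih p hle
      have hdn : p.natDegree = n + 1 := le_antisymm hp hgt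
      have hp0 : p ≠ 0 := by
        intro h; rw [h, natDegree_zero] at hdn; omega
      set q := p - p.leadingCoeff • (X + C α₁) ^ (n + 1) with hq
      have hsm : p.leadingCoeff • (X + C α₁) ^ (n + 1) = C p.leadingCoeff * (X + C α₁) ^ (n + 1) :=
        smul_eq_C_mul _
      have hlc : (p.leadingCoeff • (X + C α₁) ^ (n + 1)).leadingCoeff = p.leadingCoeff := by
        rw [hsm, leadingCoeff_mul, leadingCoeff_C, (hmonic (n + 1)).leadingCoeff, mul_one]
      have hlcne : p.leadingCoeff ≠ 0 := leadingCoeff_ne_zero.mpr hp0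
      have hsmne : p.leadingCoeff • (X + C α₁) ^ (n + 1) ≠ 0 := by
        intro h
        rw [h, leadingCoeff_zero] at hlc
        exact hlcne hlc.symm
      have hsmdeg : (p.leadingCoeff • (X + C α₁) ^ (n + 1)).natDegree = n + 1 := by
        rw [hsm, natDegree_mul (by simpa using hlcne) (hmonic (n+1)).ne_zero,
          natDegree_C, hpowdeg, zero_add]
      have hqdeg : q.natDegree ≤ n := by
        by_cases hq0 : q = 0
        · rw [hq0, natDegree_zero]; omega
        have : q.natDegree < p.natDegree := by
          apply natDegree_lt_natDegree hq0
          apply degree_sub_lt _ hp0 hlc.symm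
          rw [degree_eq_natDegree hp0, degree_eq_natDegree hsmne, hdn, hsmdeg]
        omega
      have hqU : q ∈ U := ih q hqdeg
      have : p = q + p.leadingCoeff • (X + C α₁) ^ (n + 1) := by rw [hq]; ring
      rw [this]
      exact U.add_mem hqU (U.smul_mem _ (hpow (n + 1)))
  rw [Submodule.eq_top_iff']
  exact fun p => htop p.natDegree p le_rfl
end

section
/- Let r ∈ ℤ_{≥0} and M an a_r-module. On N(M,0), define for each k ∈ ℤ the shift operator S_k(v⊗t^n) = v⊗t^{n+k}. Then for all n, m ∈ ℤ: D_n ∘ S_m − S_m ∘ D_n = m·S_{m+n}, and S_n ∘ S_m = S_m ∘ S_n. In particular these operators make N(M,0) into a module over the twisted Heisenberg–Virasoro algebra with all three central elements acting by zero. -/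
open Finsupp

variable {M : Type*} [AddCommGroup M] [Module ℂ M]

/-- The shift operator `S_k (v ⊗ t^n) = v ⊗ t^{n+k}` on `N(M,0)`. -/
noncomputable def Sop (k : ℤ) : (ℤ →₀ M) →ₗ[ℂ] (ℤ →₀ M) :=
  Finsupp.lsum ℂ fun n : ℤ => (Finsupp.lsingle (n + k) : M →ₗ[ℂ] ℤ →₀ M)

/-- on `N(M,0)`, the operators `D_n` and the shifts `S_k` satisfy
`D_n ∘ S_m − S_m ∘ D_n = m·S_{m+n}` and `S_n ∘ S_m = S_m ∘ S_n`; in particular these make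
`N(M,0)` a module over the twisted Heisenberg–Virasoro algebra with all three central elements
acting by zero. -/
theorem heisenberg_virasoro_relations (r : ℕ) (T : ℕ → Module.End ℂ M)
    (hT : IsArModule r T) (n m : ℤ) :
    Dop r T 0 n ∘ₗ (Sop m : (ℤ →₀ M) →ₗ[ℂ] ℤ →₀ M) - Sop m ∘ₗ Dop r T 0 n
        = (m : ℂ) • (Sop (m + n) : (ℤ →₀ M) →ₗ[ℂ] ℤ →₀ M) ∧
      (Sop n : (ℤ →₀ M) →ₗ[ℂ] ℤ →₀ M) ∘ₗ Sop m = Sop m ∘ₗ Sop n := by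
  constructor
  · apply Finsupp.lhom_ext
    intro k v
    simp only [LinearMap.sub_apply, LinearMap.comp_apply, LinearMap.smul_apply,
      Dop, Sop, Finsupp.lsum_single, Finsupp.lsingle_apply, LinearMap.add_apply,
      LinearMap.id_apply]
    rw [show k + m + n = k + (m + n) by ring, show k + n + m = k + (m + n) by ring,
      ← Finsupp.single_sub, Finsupp.smul_single]
    congr 1
    push_cast
    module
  · apply Finsupp.lhom_ext
    intro k v
    simp only [LinearMap.comp_apply, Sop, Finsupp.lsum_single, Finsupp.lsingle_apply]
    rw [add_right_comm]
end

section
/- Let r ≥ 1, let M be a simple a_r-module such that T_r : M → M is injective, and let β ∈ ℂ[t,t⁻¹] be a nonconstant Laurent polynomial. Then N(M,β) is simple: the only subspaces W ⊆ N(M,0) with D^β_n W ⊆ W for all n ∈ ℤ are 0 and the whole space. -/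
open Finsupp

variable {M : Type*} [AddCommGroup M] [Module ℂ M]

/-- The multiplication operator by `β t^n`, where `β = Σ_j b_j t^j` is a Laurent polynomial
(encoded as the finitely supported family `β : ℤ →₀ ℂ` of its coefficients):
`v ⊗ t^k ↦ Σ_j b_j • (v ⊗ t^{k+n+j})`. -/
noncomputable def Bop (β : ℤ →₀ ℂ) (n : ℤ) : (ℤ →₀ M) →ₗ[ℂ] (ℤ →₀ M) :=
  Finsupp.lsum ℂ fun k : ℤ =>
    ∑ j ∈ β.support, β j • (Finsupp.lsingle (k + n + j) : M →ₗ[ℂ] ℤ →₀ M)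

/-- The twisted operator `D^β_n = D_n + β t^n` on `N(M,β) = N(M,0)`:
`D^β_n (v ⊗ t^k) = D_n (v ⊗ t^k) + Σ_j b_j • (v ⊗ t^{k+n+j})`. -/
noncomputable def DBop (r : ℕ) (T : ℕ → Module.End ℂ M) (β : ℤ →₀ ℂ) (n : ℤ) :
    (ℤ →₀ M) →ₗ[ℂ] (ℤ →₀ M) :=
  Dop r T 0 n + Bop β n

namespace TNS

noncomputable def sh (N : ℤ) : Module.End ℂ (ℤ →₀ M) :=
  Finsupp.lsum ℂ fun k : ℤ => (Finsupp.lsingle (k + N) : M →ₗ[ℂ] ℤ →₀ M)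

noncomputable def lift (A : Module.End ℂ M) : Module.End ℂ (ℤ →₀ M) :=
  Finsupp.lsum ℂ fun k : ℤ => (Finsupp.lsingle k : M →ₗ[ℂ] ℤ →₀ M) ∘ₗ A

noncomputable def deg : Module.End ℂ (ℤ →₀ M) :=
  Finsupp.lsum ℂ fun k : ℤ => (k : ℂ) • (Finsupp.lsingle k : M →ₗ[ℂ] ℤ →₀ M)

@[simp] lemma sh_single (N k : ℤ) (v : M) : sh N (single k v) = single (k + N) v := by
  simp [sh]

@[simp] lemma lift_single (A : Module.End ℂ M) (k : ℤ) (v : M) :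
    lift A (single k v) = single k (A v) := by simp [lift]

@[simp] lemma deg_single (k : ℤ) (v : M) :
    (deg (single k v) : ℤ →₀ M) = (k : ℂ) • single k v := by simp [deg]

noncomputable def bmul (β : ℤ →₀ ℂ) : Module.End ℂ (ℤ →₀ M) :=
  ∑ j ∈ β.support, β j • sh j

noncomputable def pp (r : ℕ) (T : ℕ → Module.End ℂ M) (n : ℤ) : Module.End ℂ (ℤ →₀ M) :=
  ∑ i ∈ Finset.range (r + 1),
    ((n : ℂ) ^ (i + 1) / (Nat.factorial (i + 1) : ℂ)) • lift (T i)

noncomputable def rr (r : ℕ) (T : ℕ → Module.End ℂ M) (β : ℤ →₀ ℂ) (n : ℤ) :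
    Module.End ℂ (ℤ →₀ M) :=
  deg + bmul β + pp r T n

lemma bmul_single (β : ℤ →₀ ℂ) (k : ℤ) (v : M) :
    bmul β (single k v : ℤ →₀ M) = ∑ j ∈ β.support, β j • single (k + j) v := by
  simp [bmul, LinearMap.sum_apply]

lemma pp_single (r : ℕ) (T : ℕ → Module.End ℂ M) (n k : ℤ) (v : M) :
    pp r T n (single k v) = ∑ i ∈ Finset.range (r + 1),
      ((n : ℂ) ^ (i + 1) / (Nat.factorial (i + 1) : ℂ)) • single k (T i v) := by
  simp [pp, LinearMap.sum_apply]

lemma sh_mul_sh (a b : ℤ) : (sh a * sh b : Module.End ℂ (ℤ →₀ M)) = sh (a + b) := by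
  refine Finsupp.lhom_ext fun k v => ?_
  simp [Module.End.mul_apply, add_assoc, add_comm a b]

@[simp] lemma sh_zero : (sh 0 : Module.End ℂ (ℤ →₀ M)) = 1 := by
  refine Finsupp.lhom_ext fun k v => ?_
  simp

lemma lift_mul (A B : Module.End ℂ M) : (lift A * lift B : Module.End ℂ (ℤ →₀ M)) = lift (A * B) := by
  refine Finsupp.lhom_ext fun k v => ?_
  simp [Module.End.mul_apply]

lemma deg_comm_lift (A : Module.End ℂ M) :
    (deg * lift A : Module.End ℂ (ℤ →₀ M)) = lift A * deg := by
  refine Finsupp.lhom_ext fun k v => ?_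
  simp [Module.End.mul_apply]

/-- Structure of the twisted operators: `D^β_n = sh n ∘ rr n`. -/
lemma dbop_eq (r : ℕ) (T : ℕ → Module.End ℂ M) (β : ℤ →₀ ℂ) (n : ℤ) :
    DBop r T β n = (sh n * rr r T β n : Module.End ℂ (ℤ →₀ M)) := by
  refine Finsupp.lhom_ext fun k v => ?_
  simp only [DBop, Dop, Bop, rr, LinearMap.add_apply, Module.End.mul_apply,
    Finsupp.lsum_single, LinearMap.comp_apply, LinearMap.smul_apply, LinearMap.id_apply,
    LinearMap.sum_apply, lsingle_apply, map_add, map_sum, map_smul,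
    bmul_single, pp_single, deg_single, sh_single]
  rw [zero_add]
  simp only [add_right_comm]

variable {r : ℕ} {T : ℕ → Module.End ℂ M} {β : ℤ →₀ ℂ}

/-- conjugation of `rr` by a shift -/
lemma rr_conj (a b : ℤ) (t : ℂ) :
    ((rr r T β a + t • 1) * sh b : Module.End ℂ (ℤ →₀ M)) =
      sh b * (rr r T β a + (t + (b : ℂ)) • 1) := by
  refine Finsupp.lhom_ext fun k v => ?_
  simp only [rr, Module.End.mul_apply, LinearMap.add_apply, LinearMap.smul_apply,
    Module.End.one_apply, sh_single, deg_single, bmul_single, pp_single, map_add, map_sum,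
    map_smul, Int.cast_add, add_smul]
  simp only [add_right_comm]
  abel

lemma rr_mul_sh (a b : ℤ) :
    (rr r T β a * sh b : Module.End ℂ (ℤ →₀ M)) =
      sh b * (rr r T β a + (b : ℂ) • 1) := by
  have := rr_conj (M := M) (r := r) (T := T) (β := β) a b 0
  simpa [zero_smul, zero_add] using this

/-- the key triple-product factorization -/
lemma key_factor (N c : ℤ) :
    (DBop r T β (-c) * DBop r T β N * DBop r T β c : Module.End ℂ (ℤ →₀ M)) =
      sh N * ((rr r T β (-c) + (((N : ℂ) + (c : ℂ)) • 1)) *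
        ((rr r T β N + (c : ℂ) • 1) * rr r T β c)) := by
  rw [dbop_eq, dbop_eq, dbop_eq]
  calc (sh (-c) * rr r T β (-c)) * (sh N * rr r T β N) * (sh c * rr r T β c)
      = sh (-c) * ((rr r T β (-c) * sh N) * (rr r T β N * sh c)) * rr r T β c := by
        simp only [mul_assoc]
    _ = sh (-c) * ((sh N * (rr r T β (-c) + (N : ℂ) • 1)) *
          (sh c * (rr r T β N + (c : ℂ) • 1))) * rr r T β c := by
        rw [rr_mul_sh, rr_mul_sh]
    _ = sh (-c) * sh N * (((rr r T β (-c) + (N : ℂ) • 1) * sh c) *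
          ((rr r T β N + (c : ℂ) • 1) * rr r T β c)) := by simp only [mul_assoc]
    _ = sh (-c) * sh N * ((sh c * (rr r T β (-c) + ((N : ℂ) + (c : ℂ)) • 1)) *
          ((rr r T β N + (c : ℂ) • 1) * rr r T β c)) := by rw [rr_conj]
    _ = (sh (-c) * sh N * sh c) * ((rr r T β (-c) + ((N : ℂ) + (c : ℂ)) • 1) *
          ((rr r T β N + (c : ℂ) • 1) * rr r T β c)) := by simp only [mul_assoc]
    _ = sh N * ((rr r T β (-c) + (((N : ℂ) + (c : ℂ)) • 1)) *
          ((rr r T β N + (c : ℂ) • 1) * rr r T β c)) := by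
        rw [sh_mul_sh, sh_mul_sh]
        norm_num



/-- If a polynomial family with vector coefficients takes values in a submodule at all integers,
then each coefficient lies in the submodule. -/
lemma coeff_mem {V : Type*} [AddCommGroup V] [Module ℂ V] (U : Submodule ℂ V) (D : ℕ)
    (a : ℕ → V) (h : ∀ n : ℤ, (∑ d ∈ Finset.range D, ((n : ℂ) ^ d) • a d) ∈ U) :
    ∀ d < D, a d ∈ U := by
  intro d hd
  set A : Matrix (Fin D) (Fin D) ℂ := Matrix.vandermonde (fun i => (i : ℂ)) with hA
  have hdet : IsUnit A.det := by
    rw [hA, Matrix.det_vandermonde]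
    apply IsUnit.mk0
    apply Finset.prod_ne_zero_iff.2
    intro i _
    apply Finset.prod_ne_zero_iff.2
    intro j hj
    have : (i : ℕ) < (j : ℕ) := by simpa [Finset.mem_filter] using hj
    have : (i : ℂ) ≠ (j : ℂ) := by
      exact_mod_cast Nat.ne_of_lt this
    exact sub_ne_zero.2 (Ne.symm this)
  have hinv : A⁻¹ * A = 1 := Matrix.nonsing_inv_mul A hdet
  have key : a d = ∑ i : Fin D, (A⁻¹ ⟨d, hd⟩ i) •
      (∑ e ∈ Finset.range D, (((i : ℕ) : ℂ) ^ e) • a e) := by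
    have : ∀ i : Fin D, (∑ e ∈ Finset.range D, (((i : ℕ) : ℂ) ^ e) • a e)
        = ∑ e : Fin D, A i e • a e := by
      intro i
      rw [Finset.sum_range fun e => (((i : ℕ) : ℂ) ^ e) • a e]
      rfl
    simp only [this, Finset.smul_sum, smul_smul]
    rw [Finset.sum_comm]
    have : ∀ e : Fin D, (∑ i : Fin D, (A⁻¹ ⟨d, hd⟩ i * A i e) • a e)
        = ((A⁻¹ * A) ⟨d, hd⟩ e) • a e := by
      intro e
      rw [← Finset.sum_smul]
      rfl
    simp only [this, hinv, Matrix.one_apply]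
    rw [Finset.sum_eq_single ⟨d, hd⟩]
    · simp
    · intro b _ hb; simp [Ne.symm hb]
    · intro hmem; exact absurd (Finset.mem_univ _) hmem
  rw [key]
  exact Submodule.sum_mem _ fun i _ => Submodule.smul_mem _ _ (by
    have := h ((i : ℕ) : ℤ)
    simpa using this)

/-- Generalized extraction: monomial family indexed by any finite set. -/
lemma fiber_mem {V : Type*} [AddCommGroup V] [Module ℂ V] (U : Submodule ℂ V)
    {ι : Type*} [DecidableEq ι] (s : Finset ι) (σ : ι → ℕ) (a : ι → V)
    (h : ∀ n : ℤ, (∑ x ∈ s, ((n : ℂ) ^ (σ x)) • a x) ∈ U) (g : ℕ) :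
    (∑ x ∈ s.filter (fun x => σ x = g), a x) ∈ U := by
  set D := s.sup σ + 1 with hD
  have hlt : ∀ x ∈ s, σ x < D := fun x hx =>
    Nat.lt_succ_of_le (Finset.le_sup hx)
  by_cases hg : g < D
  · have h2 : ∀ n : ℤ, (∑ d ∈ Finset.range D,
        ((n : ℂ) ^ d) • (∑ x ∈ s.filter (fun x => σ x = d), a x)) ∈ U := by
      intro n
      have := h n
      rwa [← Finset.sum_fiberwise_of_maps_to (g := σ) (t := Finset.range D)
        (fun x hx => Finset.mem_range.2 (hlt x hx)),
        Finset.sum_congr rfl (fun d _ => ?_)] at this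
      rw [Finset.smul_sum]
      refine Finset.sum_congr rfl fun x hx => ?_
      rw [(Finset.mem_filter.1 hx).2]
    exact coeff_mem U D _ h2 g hg
  · have : s.filter (fun x => σ x = g) = ∅ := by
      apply Finset.filter_eq_empty_iff.2
      intro x hx
      exact fun he => hg (he ▸ hlt x hx)
    simp [this]



variable {r : ℕ} {T : ℕ → Module.End ℂ M} {β : ℤ →₀ ℂ}

/-- coefficient operators of `rr` as a polynomial in `n` -/
noncomputable def cop (r : ℕ) (T : ℕ → Module.End ℂ M) (β : ℤ →₀ ℂ) : ℕ → Module.End ℂ (ℤ →₀ M)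
  | 0 => deg + bmul β
  | (g+1) => ((((g+1).factorial : ℕ) : ℂ))⁻¹ • lift (T g)

lemma rr_eq_sum (c : ℤ) :
    rr r T β c = ∑ f ∈ Finset.range (r + 2), ((c : ℂ) ^ f) • cop r T β f := by
  rw [Finset.sum_range_succ']
  simp only [cop, pow_zero, one_smul, smul_smul]
  rw [add_comm, rr]
  congr 1

/-- coefficient operators of `rr (-c) + (N+c)•1` as a polynomial in `c` -/
noncomputable def aop (r : ℕ) (T : ℕ → Module.End ℂ M) (β : ℤ →₀ ℂ) (N : ℤ) :
    ℕ → Module.End ℂ (ℤ →₀ M)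
  | 0 => deg + bmul β + (N : ℂ) • 1
  | (g+1) => (if g = 0 then (1 : Module.End ℂ (ℤ →₀ M)) else 0) +
      (((-1 : ℂ) ^ (g+1)) * (((g+1).factorial : ℕ) : ℂ)⁻¹) • lift (T g)

lemma aop_eq_sum (N c : ℤ) :
    rr r T β (-c) + (((N : ℂ) + (c : ℂ)) • 1) =
      ∑ d ∈ Finset.range (r + 2), ((c : ℂ) ^ d) • aop r T β N d := by
  rw [Finset.sum_range_succ']
  simp only [aop, pow_zero, one_smul, smul_add, smul_smul]
  rw [Finset.sum_add_distrib]
  have h1 : ∑ g ∈ Finset.range (r + 1),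
      ((c : ℂ) ^ (g+1)) • (if g = 0 then (1 : Module.End ℂ (ℤ →₀ M)) else 0)
      = (c : ℂ) • 1 := by
    rw [Finset.sum_eq_single 0]
    · simp
    · intro b _ hb; simp [hb]
    · intro h; exact absurd (Finset.mem_range.2 (Nat.succ_pos r)) h
  have h2 : ∀ g ∈ Finset.range (r + 1),
      ((c : ℂ) ^ (g+1) * ((-1 : ℂ) ^ (g+1) * (((g+1).factorial : ℕ) : ℂ)⁻¹)) • lift (T g)
      = (((-c : ℤ) : ℂ) ^ (g+1) / (((g+1).factorial : ℕ) : ℂ)) • lift (T g) := by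
    intro g _
    congr 1
    push_cast
    rw [neg_pow]
    ring
  rw [h1, Finset.sum_congr rfl h2]
  have h3 : ∑ g ∈ Finset.range (r + 1),
      ((((-c : ℤ) : ℂ)) ^ (g+1) / (((g+1).factorial : ℕ) : ℂ)) • lift (T g)
      = pp r T (-c) := by
    unfold pp
    norm_cast
  rw [h3, rr, add_smul]
  module

/-- coefficient operators of `rr N + c•1` -/
noncomputable def midop (r : ℕ) (T : ℕ → Module.End ℂ M) (β : ℤ →₀ ℂ) (N : ℤ) :
    ℕ → Module.End ℂ (ℤ →₀ M)
  | 0 => rr r T β N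
  | _ => 1

lemma midop_eq_sum (N c : ℤ) :
    rr r T β N + ((c : ℂ) • 1) = ∑ e ∈ Finset.range 2, ((c : ℂ) ^ e) • midop r T β N e := by
  simp [Finset.sum_range_succ, midop]

/-- expansion of a product of two monomial sums -/
lemma expand2 {A : Type*} [Ring A] [Algebra ℂ A] {ι κ : Type*} (s : Finset ι) (t : Finset κ)
    (σ : ι → ℕ) (τ : κ → ℕ) (f : ι → A) (g : κ → A) (c : ℂ) :
    (∑ i ∈ s, c ^ (σ i) • f i) * (∑ j ∈ t, c ^ (τ j) • g j) =
      ∑ x ∈ s ×ˢ t, c ^ (σ x.1 + τ x.2) • (f x.1 * g x.2) := by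
  rw [Finset.sum_mul_sum, Finset.sum_product]
  refine Finset.sum_congr rfl fun i _ => Finset.sum_congr rfl fun j _ => ?_
  rw [smul_mul_assoc, mul_smul_comm, smul_smul, pow_add]

/-- expansion of a triple product of monomial sums -/
lemma triple_expand {A : Type*} [Ring A] [Algebra ℂ A] (sa sb sc : Finset ℕ)
    (fa fb fc : ℕ → A) (c : ℂ) :
    (∑ d ∈ sa, c ^ d • fa d) * ((∑ e ∈ sb, c ^ e • fb e) * (∑ f ∈ sc, c ^ f • fc f)) =
      ∑ x ∈ sa ×ˢ (sb ×ˢ sc), c ^ (x.1 + (x.2.1 + x.2.2)) •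
        (fa x.1 * (fb x.2.1 * fc x.2.2)) := by
  rw [expand2 sb sc (fun x => x) (fun x => x) fb fc c,
    expand2 sa (sb ×ˢ sc) (fun x => x) (fun x => x.1 + x.2) fa (fun x => fb x.1 * fc x.2) c]


end TNS

/-- for `r ≥ 1`, a simple `a_r`-module `M` with `T_r` injective, and a
nonconstant Laurent polynomial `β`, the twisted module `N(M,β)` is simple: the only subspaces
`W` with `D^β_n W ⊆ W` for all `n ∈ ℤ` are `0` and the whole space. -/
theorem twisted_N_simple (r : ℕ) (hr : 1 ≤ r) (T : ℕ → Module.End ℂ M)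
    (hT : IsArModule r T) (hsimple : IsSimpleArModule r T)
    (hinj : Function.Injective (T r))
    (β : ℤ →₀ ℂ) (hβ : ∃ j : ℤ, j ≠ 0 ∧ β j ≠ 0)
    (W : Submodule ℂ (ℤ →₀ M)) (hW : ∀ n : ℤ, ∀ w ∈ W, DBop r T β n w ∈ W) :
    W = ⊥ ∨ W = ⊤ := by
  classical
  by_cases hbot : W = ⊥
  · exact Or.inl hbot
  right
  set ψ : Module.End ℂ M := T r * T r with hψdef
  -- ψ is injective, and so are its powers
  have hψinj : Function.Injective ψ := by
    intro a b hab
    exact hinj (hinj hab)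
  have hψqinj : ∀ q : ℕ, Function.Injective ⇑(ψ ^ q) := by
    intro q
    induction q with
    | zero => simp [pow_zero]; exact fun a b h => h
    | succ q ih =>
      intro a b hab
      rw [pow_succ] at hab
      exact hψinj (ih hab)
  -- KEY STEP 1 : for every N, `sh N ∘ lift ψ` preserves W
  have key1 : ∀ N : ℤ, ∀ w ∈ W, TNS.sh N (TNS.lift ψ w) ∈ W := by
    intro N w hw
    set ev : Module.End ℂ (ℤ →₀ M) →ₗ[ℂ] (ℤ →₀ M) :=
      (TNS.sh N : Module.End ℂ (ℤ →₀ M)) ∘ₗ (LinearMap.applyₗ w) with hev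
    set U : Submodule ℂ (Module.End ℂ (ℤ →₀ M)) := W.comap ev with hUdef
    have hUmem : ∀ X : Module.End ℂ (ℤ →₀ M), X ∈ U ↔ TNS.sh N (X w) ∈ W := by
      intro X
      rw [hUdef, Submodule.mem_comap, hev]
      rfl
    have hmem : ∀ c : ℤ,
        (∑ x ∈ Finset.range (r+2) ×ˢ (Finset.range 2 ×ˢ Finset.range (r+2)),
          ((c : ℂ) ^ (x.1 + (x.2.1 + x.2.2))) •
            (TNS.aop r T β N x.1 * (TNS.midop r T β N x.2.1 * TNS.cop r T β x.2.2))) ∈ U := by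
      intro c
      have hexp := TNS.triple_expand (Finset.range (r+2)) (Finset.range 2)
        (Finset.range (r+2)) (TNS.aop r T β N) (TNS.midop r T β N) (TNS.cop r T β) (c : ℂ)
      rw [← TNS.aop_eq_sum N c, ← TNS.midop_eq_sum N c, ← TNS.rr_eq_sum c] at hexp
      rw [hUmem _, ← hexp]
      have hf := TNS.key_factor (r := r) (T := T) (β := β) N c
      have happ : TNS.sh N (((TNS.rr r T β (-c) + (((N : ℂ) + (c : ℂ)) • 1)) *
          ((TNS.rr r T β N + (c : ℂ) • 1) * TNS.rr r T β c)) w)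
          = DBop r T β (-c) (DBop r T β N (DBop r T β c w)) := by
        have := congrArg (fun X : Module.End ℂ (ℤ →₀ M) => X w) hf
        simpa only [Module.End.mul_apply] using this.symm
      rw [happ]
      exact hW _ _ (hW _ _ (hW _ _ hw))
    have hfib := TNS.fiber_mem U
      (Finset.range (r+2) ×ˢ (Finset.range 2 ×ˢ Finset.range (r+2)))
      (fun x => x.1 + (x.2.1 + x.2.2))
      (fun x => TNS.aop r T β N x.1 * (TNS.midop r T β N x.2.1 * TNS.cop r T β x.2.2))
      hmem (2*r+3)
    have hset : (Finset.range (r+2) ×ˢ (Finset.range 2 ×ˢ Finset.range (r+2))).filter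
        (fun x => x.1 + (x.2.1 + x.2.2) = 2*r+3) = {(r+1, (1, r+1))} := by
      ext x
      simp only [Finset.mem_filter, Finset.mem_product, Finset.mem_range,
        Finset.mem_singleton, Prod.ext_iff]
      omega
    rw [hset, Finset.sum_singleton] at hfib
    -- evaluate the three coefficient operators
    have hr0 : r ≠ 0 := by omega
    have haop : TNS.aop r T β N (r+1) =
        (((-1 : ℂ) ^ (r+1)) * (((r+1).factorial : ℕ) : ℂ)⁻¹) • TNS.lift (T r) := by
      show (if r = 0 then (1 : Module.End ℂ (ℤ →₀ M)) else 0) + _ = _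
      rw [if_neg hr0, zero_add]
    have hmid : TNS.midop r T β N 1 = 1 := rfl
    have hcop : TNS.cop r T β (r+1) = ((((r+1).factorial : ℕ) : ℂ))⁻¹ • TNS.lift (T r) := rfl
    rw [haop, hmid, hcop, one_mul, smul_mul_assoc, mul_smul_comm, smul_smul] at hfib
    set κ : ℂ := ((-1 : ℂ) ^ (r+1)) * (((r+1).factorial : ℕ) : ℂ)⁻¹ *
      ((((r+1).factorial : ℕ) : ℂ))⁻¹ with hκdef
    have hκ : κ ≠ 0 := by
      apply mul_ne_zero
      apply mul_ne_zero
      · exact pow_ne_zero _ (by norm_num)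
      · exact inv_ne_zero (Nat.cast_ne_zero.2 (Nat.factorial_ne_zero _))
      · exact inv_ne_zero (Nat.cast_ne_zero.2 (Nat.factorial_ne_zero _))
    have hfib2 := U.smul_mem κ⁻¹ hfib
    rw [smul_smul, inv_mul_cancel₀ hκ, one_smul] at hfib2
    rw [TNS.lift_mul] at hfib2
    exact (hUmem _).1 hfib2
  -- basic consequences
  have hΦ : ∀ w ∈ W, TNS.lift ψ w ∈ W := by
    intro w hw
    have := key1 0 w hw
    rwa [TNS.sh_zero, Module.End.one_apply] at this
  have hE0 : ∀ w ∈ W, TNS.deg w + TNS.bmul β w ∈ W := by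
    intro w hw
    have h := hW 0 w hw
    rw [TNS.dbop_eq] at h
    have hpp0 : TNS.pp r T (0 : ℤ) = 0 := by
      unfold TNS.pp
      simp
    rw [TNS.rr, hpp0, add_zero, TNS.sh_zero, one_mul, LinearMap.add_apply] at h
    exact h
  have hbmulΦ : ∀ w ∈ W, TNS.bmul β (TNS.lift ψ w) ∈ W := by
    intro w hw
    have heq : TNS.bmul β (TNS.lift ψ w) = ∑ j ∈ β.support, β j • TNS.sh j (TNS.lift ψ w) := by
      rw [TNS.bmul]
      simp [LinearMap.sum_apply]
    rw [heq]
    exact Submodule.sum_mem _ fun j _ => Submodule.smul_mem _ _ (key1 j w hw)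
  have hdegΦ : ∀ w ∈ W, TNS.deg (TNS.lift ψ w) ∈ W := by
    intro w hw
    have := W.sub_mem (hE0 _ (hΦ w hw)) (hbmulΦ w hw)
    simpa using this
  -- powers of deg composed with powers of lift ψ preserve W
  have hpow : ∀ q p : ℕ, p ≤ q → ∀ w ∈ W, (TNS.deg ^ p) ((TNS.lift ψ ^ q) w) ∈ W := by
    intro q
    induction q with
    | zero =>
      intro p hp w hw
      obtain rfl : p = 0 := Nat.le_zero.1 hp
      simpa using hw
    | succ q ih =>
      intro p hp w hw
      have hstep : ∀ x : ℤ →₀ M, (TNS.lift ψ ^ (q+1)) x = (TNS.lift ψ ^ q) (TNS.lift ψ x) := by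
        intro x
        rw [pow_succ, Module.End.mul_apply]
      rcases Nat.eq_zero_or_pos p with rfl | hpos
      · rw [hstep]
        exact ih 0 (Nat.zero_le _) _ (hΦ w hw)
      · obtain ⟨p', rfl⟩ : ∃ p', p = p' + 1 := ⟨p - 1, by omega⟩
        have hcomm : Commute TNS.deg (TNS.lift ψ) := TNS.deg_comm_lift ψ
        have hop : (TNS.deg ^ (p'+1) * TNS.lift ψ ^ (q+1) : Module.End ℂ (ℤ →₀ M))
            = (TNS.deg ^ p' * TNS.lift ψ ^ q) * (TNS.deg * TNS.lift ψ) := by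
          have h1 : (TNS.deg ^ (p'+1) : Module.End ℂ (ℤ →₀ M)) = TNS.deg ^ p' * TNS.deg :=
            pow_succ _ _
          have h2 : (TNS.lift ψ ^ (q+1) : Module.End ℂ (ℤ →₀ M)) = TNS.lift ψ ^ q * TNS.lift ψ :=
            pow_succ _ _
          rw [h1, h2, mul_assoc, ← mul_assoc TNS.deg, (hcomm.pow_right q).eq, mul_assoc,
            ← mul_assoc, ← mul_assoc]
        have happ : (TNS.deg ^ (p'+1)) ((TNS.lift ψ ^ (q+1)) w)
            = (TNS.deg ^ p') ((TNS.lift ψ ^ q) (TNS.deg (TNS.lift ψ w))) := by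
          have := congrArg (fun X : Module.End ℂ (ℤ →₀ M) => X w) hop
          simpa only [Module.End.mul_apply] using this
        rw [happ]
        exact ih p' (by omega) _ (hdegΦ w hw)
  -- action on single elements
  have hdegpow_single : ∀ (p : ℕ) (k : ℤ) (v : M),
      (TNS.deg ^ p) (Finsupp.single k v) = ((k:ℂ)^p) • Finsupp.single k v := by
    intro p
    induction p with
    | zero => intro k v; simp
    | succ p ih =>
      intro k v
      rw [pow_succ, Module.End.mul_apply, TNS.deg_single, map_smul, ih, smul_smul, pow_succ]
      ring_nf
  have hliftpow_single : ∀ (q : ℕ) (k : ℤ) (v : M),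
      (TNS.lift ψ ^ q) (Finsupp.single k v) = Finsupp.single k ((ψ^q) v) := by
    intro q
    induction q with
    | zero => intro k v; simp
    | succ q ih =>
      intro k v
      rw [pow_succ, Module.End.mul_apply, TNS.lift_single, ih, pow_succ, Module.End.mul_apply]
      rfl
  -- separation of components via Lagrange interpolation
  have hsingle_mem : ∀ w ∈ W, ∀ k₀ ∈ w.support,
      Finsupp.single k₀ ((ψ ^ w.support.card) (w k₀)) ∈ W := by
    intro w hw k₀ hk₀
    set s := w.support with hs
    set m := s.card with hm
    have hm1 : 1 ≤ m := Finset.card_pos.2 ⟨k₀, hk₀⟩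
    have hinjOn : Set.InjOn (fun k : ℤ => (k : ℂ)) s := fun a _ b _ h => by
      exact_mod_cast (Int.cast_injective (α := ℂ) h)
    set L := Lagrange.interpolate s (fun k : ℤ => (k : ℂ)) (fun k => if k = k₀ then 1 else 0)
      with hL
    have hLdeg : L.natDegree < m := by
      rcases eq_or_ne L 0 with h0 | h0
      · rw [h0, Polynomial.natDegree_zero]; exact hm1
      · rw [Polynomial.natDegree_lt_iff_degree_lt h0]
        exact_mod_cast Lagrange.degree_interpolate_lt _ hinjOn
    have hLval : ∀ k ∈ s, L.eval ((k : ℂ)) = if k = k₀ then 1 else 0 := by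
      intro k hk
      exact Lagrange.eval_interpolate_at_node _ hinjOn hk
    have humem : (∑ p ∈ Finset.range m, L.coeff p • ((TNS.deg ^ p) ((TNS.lift ψ ^ m) w))) ∈ W :=
      Submodule.sum_mem _ fun p hp =>
        Submodule.smul_mem _ _ (hpow m p (Nat.le_of_lt_succ (by
          simpa using Nat.lt_succ_of_lt (Finset.mem_range.1 hp))) w hw)
    have hwsum : w = ∑ k ∈ s, Finsupp.single k (w k) := by
      conv_lhs => rw [← Finsupp.sum_single w]
      rfl
    have hcalc : (∑ p ∈ Finset.range m, L.coeff p • ((TNS.deg ^ p) ((TNS.lift ψ ^ m) w)))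
        = Finsupp.single k₀ ((ψ ^ m) (w k₀)) := by
      conv_lhs => rw [hwsum]
      have h1 : ∀ p : ℕ, (TNS.deg ^ p) ((TNS.lift ψ ^ m) (∑ k ∈ s, Finsupp.single k (w k)))
          = ∑ k ∈ s, ((k:ℂ)^p) • Finsupp.single k ((ψ^m) (w k)) := by
        intro p
        rw [map_sum, map_sum]
        exact Finset.sum_congr rfl fun k _ => by rw [hliftpow_single, hdegpow_single]
      simp only [h1, Finset.smul_sum, smul_smul]
      rw [Finset.sum_comm]
      have h2 : ∀ k ∈ s, (∑ p ∈ Finset.range m, (L.coeff p * (k:ℂ)^p) •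
          Finsupp.single k ((ψ^m) (w k)))
          = (L.eval ((k:ℂ))) • Finsupp.single k ((ψ^m) (w k)) := by
        intro k _
        rw [← Finset.sum_smul, Polynomial.eval_eq_sum_range' hLdeg]
      rw [Finset.sum_congr rfl h2]
      rw [Finset.sum_congr rfl (fun k hk => by rw [hLval k hk])]
      rw [Finset.sum_eq_single k₀]
      · simp
      · intro b _ hb; simp [hb]
      · intro h; exact absurd hk₀ h
    rw [hcalc] at humem
    exact humem
  -- the submodule U of M
  set UU : Submodule ℂ M := ⨅ k : ℤ, W.comap (Finsupp.lsingle k) with hUUdef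
  have hUUmem : ∀ v : M, v ∈ UU ↔ ∀ k : ℤ, Finsupp.single k v ∈ W := by
    intro v
    rw [hUUdef, Submodule.mem_iInf]
    exact forall_congr' fun k => by rw [Submodule.mem_comap]; rfl
    -- UU nonzero element
  obtain ⟨w, hwW, hw0⟩ := Submodule.ne_bot_iff W |>.1 hbot
  obtain ⟨k₀, hk₀⟩ := Finsupp.support_nonempty_iff.2 hw0
  set u : M := (ψ ^ w.support.card) (w k₀) with hu
  have hu0 : u ≠ 0 := by
    intro h
    have : w k₀ = 0 := by
      apply hψqinj w.support.card
      simpa using h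
    exact Finsupp.mem_support_iff.1 hk₀ this
  have hsingleu : Finsupp.single k₀ u ∈ W := hsingle_mem w hwW k₀ hk₀
  have hUu : (ψ u) ∈ UU := by
    rw [hUUmem]
    intro k
    have := key1 (k - k₀) _ hsingleu
    rw [TNS.lift_single, TNS.sh_single] at this
    simpa using this
  have hψu0 : ψ u ≠ 0 := fun h => hu0 (hψinj (by simpa using h))
  -- UU is an a_r-submodule
  have hAr : IsArSubmodule r T UU := by
    intro i hi v hv
    rw [hUUmem] at hv
    rw [hUUmem]
    intro k'
    have hall : ∀ n : ℤ, (∑ i' ∈ Finset.range (r+1), ((n:ℂ) ^ (i'+1)) •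
        (((((i'+1).factorial : ℕ) : ℂ))⁻¹ • Finsupp.single k' (T i' v))) ∈ W := by
      intro n
      have hE := hW n _ (hv (k' - n))
      rw [TNS.dbop_eq] at hE
      have hexp : (TNS.sh n * TNS.rr r T β n : Module.End ℂ (ℤ →₀ M)) (Finsupp.single (k' - n) v)
          = ((k' - n : ℤ) : ℂ) • Finsupp.single k' v
            + ∑ j ∈ β.support, β j • Finsupp.single (k' + j) v
            + ∑ i' ∈ Finset.range (r+1),
                ((n:ℂ)^(i'+1) / (((i'+1).factorial : ℕ) : ℂ)) • Finsupp.single k' (T i' v) := by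
        rw [Module.End.mul_apply, TNS.rr, LinearMap.add_apply, LinearMap.add_apply,
          TNS.deg_single, TNS.bmul_single, TNS.pp_single, map_add, map_add, map_smul,
          map_sum, map_sum, TNS.sh_single, sub_add_cancel]
        congr 1
        congr 1
        · refine Finset.sum_congr rfl fun j _ => ?_
          rw [map_smul, TNS.sh_single]
          congr 2
          omega
        · refine Finset.sum_congr rfl fun i' _ => ?_
          rw [map_smul, TNS.sh_single, sub_add_cancel]
      rw [hexp] at hE
      have hmem1 : ((k' - n : ℤ) : ℂ) • Finsupp.single k' v ∈ W :=
        W.smul_mem _ (hv k')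
      have hmem2 : (∑ j ∈ β.support, β j • Finsupp.single (k' + j) v) ∈ W :=
        Submodule.sum_mem _ fun j _ => W.smul_mem _ (hv (k' + j))
      have hmem3 := W.sub_mem (W.sub_mem hE hmem2) hmem1
      have heq3 : (((k' - n : ℤ) : ℂ) • Finsupp.single k' v
            + ∑ j ∈ β.support, β j • Finsupp.single (k' + j) v
            + ∑ i' ∈ Finset.range (r+1),
                ((n:ℂ)^(i'+1) / (((i'+1).factorial : ℕ) : ℂ)) • Finsupp.single k' (T i' v))
            - (∑ j ∈ β.support, β j • Finsupp.single (k' + j) v)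
            - ((k' - n : ℤ) : ℂ) • Finsupp.single k' v
          = ∑ i' ∈ Finset.range (r+1),
              ((n:ℂ)^(i'+1) / (((i'+1).factorial : ℕ) : ℂ)) • Finsupp.single k' (T i' v) := by
        abel
      rw [heq3] at hmem3
      have heq4 : ∑ i' ∈ Finset.range (r+1),
          ((n:ℂ)^(i'+1) / (((i'+1).factorial : ℕ) : ℂ)) • Finsupp.single k' (T i' v)
          = ∑ i' ∈ Finset.range (r+1), ((n:ℂ) ^ (i'+1)) •
            (((((i'+1).factorial : ℕ) : ℂ))⁻¹ • Finsupp.single k' (T i' v)) := by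
        refine Finset.sum_congr rfl fun i' _ => ?_
        rw [smul_smul, div_eq_mul_inv]
      rwa [heq4] at hmem3
    have hfib := TNS.fiber_mem W (Finset.range (r+1)) (fun i' => i'+1) _ hall (i+1)
    have hset : (Finset.range (r+1)).filter (fun i' => i'+1 = i+1) = {i} := by
      ext x
      simp only [Finset.mem_filter, Finset.mem_range, Finset.mem_singleton]
      omega
    rw [hset, Finset.sum_singleton] at hfib
    have := W.smul_mem (((i+1).factorial : ℕ) : ℂ) hfib
    rwa [smul_smul, mul_inv_cancel₀
      (Nat.cast_ne_zero.2 (Nat.factorial_ne_zero _)), one_smul] at this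
  -- conclude
  rcases hsimple.2 UU hAr with hUUbot | hUUtop
  · exfalso
    rw [hUUbot] at hUu
    exact hψu0 (by simpa using hUu)
  · rw [Submodule.eq_top_iff']
    intro x
    have hx : ∀ (k : ℤ) (v : M), Finsupp.single k v ∈ W := by
      intro k v
      have hv : v ∈ UU := hUUtop ▸ Submodule.mem_top
      exact (hUUmem v).1 hv k
    have hxsum : x = ∑ k ∈ x.support, Finsupp.single k (x k) := by
      conv_lhs => rw [← Finsupp.sum_single x]
      rfl
    rw [hxsum]
    exact Submodule.sum_mem _ fun k _ => hx k (x k)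
end
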